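/- For symmetric bilinear forms φ and ψ over a field K of characteristic ≠ 2 and k ∈ ℕ, the exterior power of an orthogonal sum decomposes as Λᵏ(φ ⊥ ψ) ≃ ⊥_{i+j=k} Λⁱφ ⊗ Λʲψ. -/

import Mathlib

open TensorProduct

lemma sigma_pair_ext {k n m : ℕ}
    (p q : Σ i : Fin (k + 1), {S : Finset (Fin n) // S.card = (i : ℕ)} ×
      {T : Finset (Fin m) // T.card = k - (i : ℕ)})
    (h1 : ((p.1 : ℕ)) = (q.1 : ℕ)) (h2 : p.2.1.1 = q.2.1.1) (h3 : p.2.2.1 = q.2.2.1) : p = q := by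
  obtain ⟨i, ⟨S, hS⟩, ⟨T, hT⟩⟩ := p
  obtain ⟨j, ⟨S', hS'⟩, ⟨T', hT'⟩⟩ := q
  dsimp only at h1 h2 h3
  have hij : i = j := Fin.ext h1
  subst hij; subst h2; subst h3
  rfl
/-- From a spanning alternating "wedge" map and the right dimension count, extract a basis of
wedges of strictly increasing tuples of basis vectors. -/
lemma exists_basis_of_spanning_wedge {K V W' : Type*} [Field K] [AddCommGroup V] [Module K V]
    [AddCommGroup W'] [Module K W'] {n k : ℕ} (bV : Module.Basis (Fin n) K V)
    (w : AlternatingMap K V W' (Fin k))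
    (hspan : Submodule.span K (Set.range fun v : Fin k → V => w v) = ⊤)
    (hdim : Module.finrank K W' = n.choose k) :
    ∃ b : Module.Basis {S : Finset (Fin n) // S.card = k} K W',
      ∀ S, b S = w (fun a => bV (S.1.orderEmbOfFin S.2 a)) := by
  classical
  set fam : {S : Finset (Fin n) // S.card = k} → W' :=
    fun S => w (fun a => bV (S.1.orderEmbOfFin S.2 a)) with hfam
  have hmem : ∀ v : Fin k → V, w v ∈ Submodule.span K (Set.range fam) := by
    intro v
    have hv : w v = ∑ r : Fin k → Fin n,
        (∏ x : Fin k, bV.repr (v x) (r x)) • w (fun x => bV (r x)) := by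
      have h1 : w v = w (fun x => ∑ j : Fin n, bV.repr (v x) j • bV j) := by
        congr 1; funext x; exact (bV.sum_repr (v x)).symm
      rw [h1]
      have h2 := w.toMultilinearMap.map_sum (g := fun (x : Fin k) (j : Fin n) =>
        bV.repr (v x) j • bV j)
      simp only [AlternatingMap.coe_multilinearMap] at h2
      rw [h2]
      refine Finset.sum_congr rfl fun r _ => ?_
      have h3 := w.toMultilinearMap.map_smul_univ (fun x => bV.repr (v x) (r x))
        (fun x => bV (r x))
      simpa using h3
    rw [hv]
    refine Submodule.sum_mem _ fun r _ => Submodule.smul_mem _ _ ?_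
    by_cases hr : Function.Injective r
    · set U : Finset (Fin n) := Finset.univ.image r with hUdef
      have hU : U.card = k := by
        rw [hUdef, Finset.card_image_of_injective _ hr, Finset.card_univ, Fintype.card_fin]
      have hmemU : ∀ x, r x ∈ U := fun x => Finset.mem_image_of_mem _ (Finset.mem_univ x)
      have hr' : Function.Bijective (fun x : Fin k => (⟨r x, hmemU x⟩ : U)) := by
        rw [Fintype.bijective_iff_injective_and_card]
        exact ⟨fun a b hab => hr (congrArg Subtype.val hab), by simp [Fintype.card_coe, hU]⟩
      set σ : Equiv.Perm (Fin k) :=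
        (Equiv.ofBijective _ hr').trans (U.orderIsoOfFin hU).toEquiv.symm with hσ
      have hσe : ∀ x, U.orderEmbOfFin hU (σ x) = r x := by
        intro x
        have : (U.orderIsoOfFin hU) (σ x) = ⟨r x, hmemU x⟩ := by
          simp [hσ, Equiv.ofBijective_apply]
        rw [← Finset.coe_orderIsoOfFin_apply, this]
      have heq : w (fun x => bV (r x)) = Equiv.Perm.sign σ • fam ⟨U, hU⟩ := by
        rw [hfam]
        have h4 := w.map_perm (fun a => bV (U.orderEmbOfFin hU a)) σ
        rw [← h4]
        congr 1
        funext x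
        simp only [Function.comp_apply]
        rw [hσe x]
      have hbase : fam ⟨U, hU⟩ ∈ Submodule.span K (Set.range fam) :=
        Submodule.subset_span (Set.mem_range_self _)
      rcases Int.units_eq_one_or (Equiv.Perm.sign σ) with h | h <;> rw [heq, h]
      · simpa using hbase
      · simpa using Submodule.neg_mem _ hbase
    · rw [w.map_eq_zero_of_not_injective _ (fun hinj => hr (fun a b hab => hinj (by rw [hab])))]
      exact Submodule.zero_mem _
  have hspan' : ⊤ ≤ Submodule.span K (Set.range fam) := by
    rw [← hspan, Submodule.span_le]
    rintro x ⟨v, rfl⟩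
    exact hmem v
  have hcard : Fintype.card {S : Finset (Fin n) // S.card = k} = Module.finrank K W' := by
    rw [hdim, Fintype.card_finset_len, Fintype.card_fin]
  exact ⟨basisOfTopLeSpanOfCardEqFinrank fam hspan' hcard, fun S => by
    rw [coe_basisOfTopLeSpanOfCardEqFinrank]⟩

/-- The increasing enumeration of the disjoint union of `S ⊆ Fin n` and `T ⊆ Fin m`
inside `Fin (n + m)`: first the elements of `S`, then those of `T` shifted by `n`. -/
lemma orderEmbOfFin_disjSum {n m k i : ℕ} (hik : i ≤ k)
    (S : Finset (Fin n)) (hS : S.card = i) (T : Finset (Fin m)) (hT : T.card = k - i)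
    (hU : ((S.disjSum T).map finSumFinEquiv.toEmbedding).card = k) (a : Fin k) :
    ((S.disjSum T).map finSumFinEquiv.toEmbedding).orderEmbOfFin hU a =
      if ha : (a : ℕ) < i then Fin.castAdd m (S.orderEmbOfFin hS ⟨a, ha⟩)
      else Fin.natAdd n (T.orderEmbOfFin hT ⟨(a : ℕ) - i, by omega⟩) := by
  set f : Fin k → Fin (n + m) := fun a =>
    if ha : (a : ℕ) < i then Fin.castAdd m (S.orderEmbOfFin hS ⟨a, ha⟩)
    else Fin.natAdd n (T.orderEmbOfFin hT ⟨(a : ℕ) - i, by omega⟩) with hf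
  have hmem : ∀ x, f x ∈ (S.disjSum T).map finSumFinEquiv.toEmbedding := by
    intro x
    rw [hf]
    dsimp only
    split_ifs with hx
    · rw [← finSumFinEquiv_apply_left]
      exact Finset.mem_map_of_mem _ (Finset.inl_mem_disjSum.2 (Finset.orderEmbOfFin_mem _ _ _))
    · rw [← finSumFinEquiv_apply_right]
      exact Finset.mem_map_of_mem _ (Finset.inr_mem_disjSum.2 (Finset.orderEmbOfFin_mem _ _ _))
  have hmono : StrictMono f := by
    intro a b hab
    have hab' : (a : ℕ) < (b : ℕ) := hab
    rw [hf]
    dsimp only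
    by_cases h1 : (a : ℕ) < i <;> by_cases h2 : (b : ℕ) < i
    · rw [dif_pos h1, dif_pos h2]
      have := (S.orderEmbOfFin hS).strictMono (show (⟨a, h1⟩ : Fin i) < ⟨b, h2⟩ from hab')
      rw [Fin.lt_def] at this ⊢
      simpa using this
    · rw [dif_pos h1, dif_neg h2]
      have := (S.orderEmbOfFin hS ⟨a, h1⟩).isLt
      simp only [Fin.lt_def, Fin.coe_castAdd, Fin.coe_natAdd]
      omega
    · omega
    · rw [dif_neg h1, dif_neg h2]
      have := (T.orderEmbOfFin hT).strictMono
        (show (⟨(a : ℕ) - i, by omega⟩ : Fin (k - i)) < ⟨(b : ℕ) - i, by omega⟩ by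
          simp [Fin.lt_def]; omega)
      simp only [Fin.lt_def, Fin.coe_natAdd] at this ⊢
      omega
  have := Finset.orderEmbOfFin_unique hU hmem hmono
  exact (congrFun this a).symm

lemma det_zero_aux {k i i' : ℕ} {K : Type*} [Field K] (hii : i < i') (hik' : i' ≤ k)
    (M : Matrix (Fin k) (Fin k) K)
    (h1 : ∀ a b : Fin k, i ≤ (a : ℕ) → (b : ℕ) < i' → M a b = 0) : M.det = 0 := by
  rw [Matrix.det_apply]
  refine Finset.sum_eq_zero fun σ _ => ?_
  have hex : ∃ b : Fin k, (b : ℕ) < i' ∧ i ≤ (σ b : ℕ) := by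
    by_contra h
    push_neg at h
    have hinj : Function.Injective (fun b : Fin i' =>
        (⟨(σ (Fin.castLE hik' b) : ℕ), h _ (by simp [b.isLt])⟩ : Fin i)) := by
      intro a b hab
      have hv := congrArg Fin.val hab
      dsimp only at hv
      have hv2 := congrArg Fin.val (σ.injective (Fin.ext hv))
      simp only [Fin.coe_castLE] at hv2
      exact Fin.ext hv2
    have := Fintype.card_le_of_injective _ hinj
    simp only [Fintype.card_fin] at this
    omega
  obtain ⟨b, hb1, hb2⟩ := hex
  have hz : ∏ j : Fin k, M (σ j) j = 0 :=
    Finset.prod_eq_zero (Finset.mem_univ b) (h1 _ _ hb2 hb1)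
  rw [hz, smul_zero]

lemma det_zero_of_ne {k i i' : ℕ} {K : Type*} [Field K] (hii : i ≠ i') (hik : i ≤ k)
    (hik' : i' ≤ k) (M : Matrix (Fin k) (Fin k) K)
    (h1 : ∀ a b : Fin k, i ≤ (a : ℕ) → (b : ℕ) < i' → M a b = 0)
    (h2 : ∀ a b : Fin k, (a : ℕ) < i → i' ≤ (b : ℕ) → M a b = 0) : M.det = 0 := by
  rcases lt_or_gt_of_ne hii with h | h
  · exact det_zero_aux h hik' M h1
  · rw [← Matrix.det_transpose]
    exact det_zero_aux h hik M.transpose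
      (fun a b ha hb => by rw [Matrix.transpose_apply]; exact h2 b a hb ha)

lemma det_blocks_eq {k i : ℕ} {K : Type*} [Field K] (hik : i ≤ k)
    (M : Matrix (Fin k) (Fin k) K)
    (A : Matrix (Fin i) (Fin i) K) (D : Matrix (Fin (k - i)) (Fin (k - i)) K)
    (hA : ∀ a b : Fin i, M (Fin.castLE hik a) (Fin.castLE hik b) = A a b)
    (hD : ∀ a b : Fin (k - i),
      M ⟨i + a, by omega⟩ ⟨i + b, by omega⟩ = D a b)
    (h1 : ∀ a b : Fin k, i ≤ (a : ℕ) → (b : ℕ) < i → M a b = 0)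
    (h2 : ∀ a b : Fin k, (a : ℕ) < i → i ≤ (b : ℕ) → M a b = 0) :
    M.det = A.det * D.det := by
  have hbij : Function.Bijective
      (Sum.elim (Fin.castLE hik) (fun b : Fin (k - i) => (⟨i + b, by omega⟩ : Fin k))) := by
    constructor
    · rintro (a | a) (b | b) hab <;>
        simp only [Sum.elim_inl, Sum.elim_inr] at hab <;>
        have hv := congrArg Fin.val hab <;>
        simp only [Fin.coe_castLE] at hv
      · exact congrArg Sum.inl (Fin.ext hv)
      · have := a.isLt; omega
      · have := b.isLt; omega
      · exact congrArg Sum.inr (Fin.ext (by omega))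
    · intro x
      by_cases hx : (x : ℕ) < i
      · exact ⟨Sum.inl ⟨x, hx⟩, Fin.ext rfl⟩
      · exact ⟨Sum.inr ⟨(x : ℕ) - i, by omega⟩, Fin.ext (by first | (simp; omega) | simp | omega)⟩
  set e : Fin i ⊕ Fin (k - i) ≃ Fin k := Equiv.ofBijective _ hbij with he
  have hsub : M.submatrix e e = Matrix.fromBlocks A 0 0 D := by
    ext x y
    rcases x with a | a <;> rcases y with b | b <;>
      simp only [Matrix.submatrix_apply, he, Equiv.ofBijective_apply, Sum.elim_inl, Sum.elim_inr,
        Matrix.fromBlocks_apply₁₁, Matrix.fromBlocks_apply₁₂, Matrix.fromBlocks_apply₂₁,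
        Matrix.fromBlocks_apply₂₂, Matrix.zero_apply]
    · exact hA a b
    · exact h2 _ _ (by simpa using a.isLt) (by simp)
    · exact h1 _ _ (by simp) (by simpa using b.isLt)
    · exact hD a b
  rw [← Matrix.det_submatrix_equiv_self e M, hsub, Matrix.det_fromBlocks_zero₂₁]


/-- `B'` is (a model of) the `k`-fold exterior power of the bilinear form `B`:
`W` has dimension `C(dim V, k)` and carries an alternating multilinear wedge map
whose image spans `W` and on which `B'` is given by the determinant pairing
`Λᵏφ(x₁∧...∧x_k, y₁∧...∧y_k) = det(φ(xᵢ, yⱼ))`. -/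
def IsExteriorPower (K : Type*) [Field K] {V W : Type*} [AddCommGroup V] [Module K V]
    [AddCommGroup W] [Module K W] (k : ℕ) (B : LinearMap.BilinForm K V)
    (B' : LinearMap.BilinForm K W) : Prop :=
  Module.finrank K W = (Module.finrank K V).choose k ∧
  ∃ w : AlternatingMap K V W (Fin k),
    Submodule.span K (Set.range fun v : Fin k → V => w v) = ⊤ ∧
    ∀ v u : Fin k → V, B' (w v) (w u) = Matrix.det (Matrix.of fun i j => B (v i) (u j))

set_option maxHeartbeats 3000000 in
/-- `Λᵏ(φ ⊥ ψ) ≃ ⊥_{i+j=k} Λⁱφ ⊗ Λʲψ`. -/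
theorem extPower_orthogonal_sum (K : Type*) [Field K] (hchar : ringChar K ≠ 2)
    {V W : Type*} [AddCommGroup V] [Module K V] [AddCommGroup W] [Module K W]
    [FiniteDimensional K V] [FiniteDimensional K W] (k : ℕ)
    (B : LinearMap.BilinForm K V) (hBsym : ∀ v v', B v v' = B v' v)
    (C : LinearMap.BilinForm K W) (hCsym : ∀ w w', C w w' = C w' w)
    (Bsum : LinearMap.BilinForm K (V × W))
    (hBsum : ∀ p q : V × W, Bsum p q = B p.1 q.1 + C p.2 q.2)
    (X : Fin (k + 1) → Type*) [∀ i, AddCommGroup (X i)] [∀ i, Module K (X i)]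
    (E : ∀ i, LinearMap.BilinForm K (X i))
    (hE : ∀ i : Fin (k + 1), IsExteriorPower K (i : ℕ) B (E i))
    (Y : Fin (k + 1) → Type*) [∀ i, AddCommGroup (Y i)] [∀ i, Module K (Y i)]
    (F : ∀ i, LinearMap.BilinForm K (Y i))
    (hF : ∀ i : Fin (k + 1), IsExteriorPower K (k - (i : ℕ)) C (F i))
    {Z : Type*} [AddCommGroup Z] [Module K Z]
    (G : LinearMap.BilinForm K Z) (hG : IsExteriorPower K k Bsum G) :
    QuadraticMap.Equivalent (LinearMap.BilinMap.toQuadraticMap G)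
      (QuadraticMap.pi fun i : Fin (k + 1) =>
        LinearMap.BilinMap.toQuadraticMap (LinearMap.BilinForm.tmul (E i) (F i))) := by
  classical
  obtain ⟨hdimZ, wZ, hspanZ, hformZ⟩ := hG
  set n := Module.finrank K V with hn
  set m := Module.finrank K W with hm
  let bV : Module.Basis (Fin n) K V := Module.finBasis K V
  let bW : Module.Basis (Fin m) K W := Module.finBasis K W
  set bP : Module.Basis (Fin (n + m)) K (V × W) := (bV.prod bW).reindex finSumFinEquiv with hbPdef
  have hbPl : ∀ x : Fin n, bP (Fin.castAdd m x) = (bV x, 0) := by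
    intro x
    rw [hbPdef, Module.Basis.reindex_apply, finSumFinEquiv_symm_apply_castAdd]
    simp [Module.Basis.prod_apply]
  have hbPr : ∀ x : Fin m, bP (Fin.natAdd n x) = (0, bW x) := by
    intro x
    rw [hbPdef, Module.Basis.reindex_apply, finSumFinEquiv_symm_apply_natAdd]
    simp [Module.Basis.prod_apply]
  -- bases of the pieces
  have hEX := fun i => (hE i).2
  choose wE hspanE hformE using hEX
  have hFY := fun i => (hF i).2
  choose wF hspanF hformF using hFY
  choose bX hbX using fun i : Fin (k + 1) =>
    exists_basis_of_spanning_wedge bV (wE i) (hspanE i) (hE i).1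
  choose bY hbY using fun i : Fin (k + 1) =>
    exists_basis_of_spanning_wedge bW (wF i) (hspanF i) (hF i).1
  -- basis of Z
  have hdimZ' : Module.finrank K Z = (n + m).choose k := by
    rw [hdimZ, Module.finrank_prod, ← hn, ← hm]
  obtain ⟨bZ, hbZ⟩ := exists_basis_of_spanning_wedge bP wZ hspanZ hdimZ'
  -- the index equivalence
  let σ' : (Σ i : Fin (k + 1), {S : Finset (Fin n) // S.card = (i : ℕ)} ×
      {T : Finset (Fin m) // T.card = k - (i : ℕ)}) ≃ {U : Finset (Fin (n + m)) // U.card = k} :=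
    { toFun := fun p => ⟨(p.2.1.1.disjSum p.2.2.1).map finSumFinEquiv.toEmbedding, by
        obtain ⟨i, ⟨S, hS⟩, ⟨T, hT⟩⟩ := p
        have hik : (i : ℕ) ≤ k := Nat.lt_succ_iff.mp i.isLt
        rw [Finset.card_map, Finset.card_disjSum, hS, hT]
        omega⟩
      invFun := fun U =>
        ⟨⟨(U.1.map finSumFinEquiv.symm.toEmbedding).toLeft.card, by
            have h1 := Finset.card_toLeft_add_card_toRight
              (u := U.1.map finSumFinEquiv.symm.toEmbedding)
            rw [Finset.card_map, U.2] at h1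
            omega⟩,
          ⟨(U.1.map finSumFinEquiv.symm.toEmbedding).toLeft, rfl⟩,
          ⟨(U.1.map finSumFinEquiv.symm.toEmbedding).toRight, by
            have h1 := Finset.card_toLeft_add_card_toRight
              (u := U.1.map finSumFinEquiv.symm.toEmbedding)
            rw [Finset.card_map, U.2] at h1
            show (U.1.map finSumFinEquiv.symm.toEmbedding).toRight.card =
              k - (U.1.map finSumFinEquiv.symm.toEmbedding).toLeft.card
            omega⟩⟩
      left_inv := by
        rintro ⟨i, ⟨S, hS⟩, ⟨T, hT⟩⟩
        have hmap : ((S.disjSum T).map finSumFinEquiv.toEmbedding).map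
            finSumFinEquiv.symm.toEmbedding = S.disjSum T := by
          ext x
          simp [Finset.mem_map]
        refine sigma_pair_ext _ _ ?_ ?_ ?_ <;> dsimp only <;> rw [hmap]
        · rw [Finset.toLeft_disjSum, hS]
        · rw [Finset.toLeft_disjSum]
        · rw [Finset.toRight_disjSum]
      right_inv := by
        rintro ⟨U, hU⟩
        apply Subtype.ext
        show ((U.map finSumFinEquiv.symm.toEmbedding).toLeft.disjSum
          (U.map finSumFinEquiv.symm.toEmbedding).toRight).map finSumFinEquiv.toEmbedding = U
        rw [Finset.toLeft_disjSum_toRight]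
        ext x
        simp [Finset.mem_map] }
  -- the bilinear form on the direct sum
  set Hbil : LinearMap.BilinForm K (∀ i, X i ⊗[K] Y i) :=
    ∑ i : Fin (k + 1), LinearMap.compl₁₂ (LinearMap.BilinForm.tmul (E i) (F i))
      (LinearMap.proj i) (LinearMap.proj i) with hHdef
  have hHbil : ∀ x y : ∀ i, X i ⊗[K] Y i,
      Hbil x y = ∑ i, LinearMap.BilinForm.tmul (E i) (F i) (x i) (y i) := by
    intro x y
    rw [hHdef]
    simp [LinearMap.sum_apply, LinearMap.compl₁₂_apply, LinearMap.proj_apply]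
  have hdiag : ∀ (j : Fin (k + 1)) (v v' : X j ⊗[K] Y j),
      Hbil (Pi.single j v) (Pi.single j v') = LinearMap.BilinForm.tmul (E j) (F j) v v' := by
    intro j v v'
    rw [hHbil]
    rw [Fintype.sum_eq_single j (fun x hx => ?_)]
    · rw [Pi.single_eq_same, Pi.single_eq_same]
    · rw [Pi.single_eq_of_ne hx, map_zero, LinearMap.zero_apply]
  have hoff : ∀ (j j' : Fin (k + 1)) (v : X j ⊗[K] Y j) (v' : X j' ⊗[K] Y j'), j ≠ j' →
      Hbil (Pi.single j v) (Pi.single j' v') = 0 := by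
    intro j j' v v' hjj
    rw [hHbil]
    refine Finset.sum_eq_zero fun x _ => ?_
    by_cases hxj : x = j
    · subst hxj
      rw [Pi.single_eq_of_ne hjj]
      exact map_zero _
    · rw [Pi.single_eq_of_ne hxj, map_zero, LinearMap.zero_apply]
  set bPi : Module.Basis (Σ i : Fin (k + 1), {S : Finset (Fin n) // S.card = (i : ℕ)} ×
      {T : Finset (Fin m) // T.card = k - (i : ℕ)}) K (∀ i, X i ⊗[K] Y i) :=
    Pi.basis (fun i => (bX i).tensorProduct (bY i)) with hbPidef
  have hbPi : ∀ p, bPi p = Pi.single p.1 ((bX p.1) p.2.1 ⊗ₜ[K] (bY p.1) p.2.2) := by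
    intro p
    rw [hbPidef, Pi.basis_apply, Module.Basis.tensorProduct_apply']
  -- the key computation on basis vectors
  have key : ∀ p q, G (bZ (σ' p)) (bZ (σ' q)) = Hbil (bPi p) (bPi q) := by
    rintro ⟨i, ⟨S, hS⟩, ⟨T, hT⟩⟩ ⟨i', ⟨S', hS'⟩, ⟨T', hT'⟩⟩
    have hik : (i : ℕ) ≤ k := Nat.lt_succ_iff.mp i.isLt
    have hik' : (i' : ℕ) ≤ k := Nat.lt_succ_iff.mp i'.isLt
    have hc1 : ((S.disjSum T).map finSumFinEquiv.toEmbedding).card = k := by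
      rw [Finset.card_map, Finset.card_disjSum, hS, hT]; omega
    have hc2 : ((S'.disjSum T').map finSumFinEquiv.toEmbedding).card = k := by
      rw [Finset.card_map, Finset.card_disjSum, hS', hT']; omega
    have hσ1 : σ' ⟨i, (⟨S, hS⟩, ⟨T, hT⟩)⟩ =
        ⟨(S.disjSum T).map finSumFinEquiv.toEmbedding, hc1⟩ := rfl
    have hσ2 : σ' ⟨i', (⟨S', hS'⟩, ⟨T', hT'⟩)⟩ =
        ⟨(S'.disjSum T').map finSumFinEquiv.toEmbedding, hc2⟩ := rfl
    have hcat1 : ∀ a : Fin k,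
        bP (((S.disjSum T).map finSumFinEquiv.toEmbedding).orderEmbOfFin hc1 a) =
        if ha : (a : ℕ) < (i : ℕ) then (bV (S.orderEmbOfFin hS ⟨a, ha⟩), 0)
        else (0, bW (T.orderEmbOfFin hT ⟨(a : ℕ) - i, by omega⟩)) := by
      intro a
      rw [orderEmbOfFin_disjSum hik S hS T hT hc1 a]
      split_ifs with ha
      · rw [hbPl]
      · rw [hbPr]
    have hcat2 : ∀ a : Fin k,
        bP (((S'.disjSum T').map finSumFinEquiv.toEmbedding).orderEmbOfFin hc2 a) =
        if ha : (a : ℕ) < (i' : ℕ) then (bV (S'.orderEmbOfFin hS' ⟨a, ha⟩), 0)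
        else (0, bW (T'.orderEmbOfFin hT' ⟨(a : ℕ) - i', by omega⟩)) := by
      intro a
      rw [orderEmbOfFin_disjSum hik' S' hS' T' hT' hc2 a]
      split_ifs with ha
      · rw [hbPl]
      · rw [hbPr]
    have hLHS : G (bZ (σ' ⟨i, (⟨S, hS⟩, ⟨T, hT⟩)⟩)) (bZ (σ' ⟨i', (⟨S', hS'⟩, ⟨T', hT'⟩)⟩)) =
        (Matrix.of fun a b : Fin k =>
          Bsum (bP (((S.disjSum T).map finSumFinEquiv.toEmbedding).orderEmbOfFin hc1 a))
            (bP (((S'.disjSum T').map finSumFinEquiv.toEmbedding).orderEmbOfFin hc2 b))).det := by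
      rw [hσ1, hσ2, hbZ, hbZ, hformZ]
    rw [hLHS, hbPi, hbPi]
    dsimp only
    by_cases hii : i = i'
    · subst hii
      rw [hdiag, LinearMap.BilinForm.tensorDistrib_tmul, smul_eq_mul]
      rw [hbX, hbX, hbY, hbY, hformE, hformF]
      rw [det_blocks_eq hik _
        (Matrix.of fun a b => B (bV (S.orderEmbOfFin hS a)) (bV (S'.orderEmbOfFin hS' b)))
        (Matrix.of fun a b => C (bW (T.orderEmbOfFin hT a)) (bW (T'.orderEmbOfFin hT' b)))
        ?_ ?_ ?_ ?_]
      · exact mul_comm _ _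
      · intro a b
        show Bsum _ _ = _
        rw [hcat1, hcat2, dif_pos (show ((Fin.castLE hik a : ℕ)) < (i : ℕ) from a.isLt),
          dif_pos (show ((Fin.castLE hik b : ℕ)) < (i : ℕ) from b.isLt), hBsum]
        simp [Fin.eta]
      · intro a b
        show Bsum _ _ = _
        rw [hcat1, hcat2, dif_neg (show ¬ (((⟨(i : ℕ) + (a : ℕ), by omega⟩ : Fin k) : ℕ) < (i : ℕ))
            by first | (simp; omega) | simp | omega),
          dif_neg (show ¬ (((⟨(i : ℕ) + (b : ℕ), by omega⟩ : Fin k) : ℕ) < (i : ℕ))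
            by first | (simp; omega) | simp | omega), hBsum]
        have e1 : (⟨((⟨(i : ℕ) + (a : ℕ), by omega⟩ : Fin k) : ℕ) - (i : ℕ), by
            first | (simp; omega) | simp | omega⟩ : Fin (k - (i : ℕ))) = a := Fin.ext (by first | (simp; omega) | simp | omega)
        have e2 : (⟨((⟨(i : ℕ) + (b : ℕ), by omega⟩ : Fin k) : ℕ) - (i : ℕ), by
            first | (simp; omega) | simp | omega⟩ : Fin (k - (i : ℕ))) = b := Fin.ext (by first | (simp; omega) | simp | omega)
        simp only [e1, e2]
        simp
      · intro a b ha hb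
        show Bsum _ _ = 0
        rw [hcat1, hcat2, dif_neg (by omega), dif_pos hb, hBsum]
        simp
      · intro a b ha hb
        show Bsum _ _ = 0
        rw [hcat1, hcat2, dif_pos ha, dif_neg (by omega), hBsum]
        simp
    · rw [hoff _ _ _ _ hii]
      have hvne : (i : ℕ) ≠ (i' : ℕ) := fun h => hii (Fin.ext h)
      refine det_zero_of_ne hvne hik hik' _ ?_ ?_
      · intro a b ha hb
        show Bsum _ _ = 0
        rw [hcat1, hcat2, dif_neg (by omega), dif_pos hb, hBsum]
        simp
      · intro a b ha hb
        show Bsum _ _ = 0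
        rw [hcat1, hcat2, dif_pos ha, dif_neg (by omega), hBsum]
        simp
  -- assemble the isometry
  let f : (∀ i, X i ⊗[K] Y i) ≃ₗ[K] Z := bPi.equiv bZ σ'
  have hfb : ∀ p, f (bPi p) = bZ (σ' p) := fun p => bPi.equiv_apply p bZ σ'
  have hbil : G.compl₁₂ (f : (∀ i, X i ⊗[K] Y i) →ₗ[K] Z)
      (f : (∀ i, X i ⊗[K] Y i) →ₗ[K] Z) = Hbil := by
    refine LinearMap.ext_basis bPi bPi fun p q => ?_
    rw [LinearMap.compl₁₂_apply]
    rw [LinearEquiv.coe_coe, hfb, hfb]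
    exact key p q
  have hiso : ∀ x : ∀ i, X i ⊗[K] Y i,
      (LinearMap.BilinMap.toQuadraticMap G) (f x) =
        (QuadraticMap.pi fun i : Fin (k + 1) =>
          LinearMap.BilinMap.toQuadraticMap (LinearMap.BilinForm.tmul (E i) (F i))) x := by
    intro x
    rw [QuadraticMap.pi_apply, LinearMap.BilinMap.toQuadraticMap_apply]
    have h1 : G (f x) (f x) = Hbil x x := by
      rw [← hbil, LinearMap.compl₁₂_apply, LinearEquiv.coe_coe]
    rw [h1, hHbil]
    refine Finset.sum_congr rfl fun j _ => ?_
    rw [LinearMap.BilinMap.toQuadraticMap_apply]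
  exact ⟨QuadraticMap.IsometryEquiv.symm ⟨f, hiso⟩⟩
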